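/- Let X ∈ ℝ^{n×(1+p)} be the matrix whose i-th row is (1, x_i^⊤), and for λ ≥ 1 let X_λ ∈ ℝ^{n×(1+p)} be the matrix whose i-th row is (1, x_i^⊤/λ). Then the largest eigenvalue satisfies σ_max(X_λ^⊤ X_λ) ≤ σ_max(X^⊤X)/λ + (λ−1)n/λ ≤ σ_max(X^⊤X). -/

import Mathlib

open Matrix

lemma rayleigh_le {m : Type*} [Fintype m] [DecidableEq m] [Nonempty m]
    {A : Matrix m m ℝ} (hA : A.IsHermitian) (v : m → ℝ) :
    v ⬝ᵥ (A *ᵥ v) ≤ (⨆ i, hA.eigenvalues i) * (v ⬝ᵥ v) := by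
  set U : Matrix m m ℝ := (hA.eigenvectorUnitary : Matrix m m ℝ) with hU
  set w : m → ℝ := Uᵀ *ᵥ v with hw
  have hstar : (star U : Matrix m m ℝ) = Uᵀ := by
    simp [star, conjTranspose]
  have hUU : U * Uᵀ = 1 := by
    have := (Matrix.mem_unitaryGroup_iff).mp hA.eigenvectorUnitary.2
    rwa [hstar] at this
  have hspec : A = U * diagonal hA.eigenvalues * Uᵀ := by
    have := hA.spectral_theorem
    rw [Unitary.conjStarAlgAut_apply, ← hU, hstar] at this
    simpa using this
  have hquad : v ⬝ᵥ (A *ᵥ v) = ∑ i, hA.eigenvalues i * (w i)^2 := by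
    conv_lhs => rw [hspec]
    rw [← mulVec_mulVec, ← mulVec_mulVec, dotProduct_mulVec, ← mulVec_transpose, ← hw]
    simp [dotProduct, mulVec_diagonal, sq]
    exact Finset.sum_congr rfl fun i _ => by ring
  have hnorm : v ⬝ᵥ v = ∑ i, (w i)^2 := by
    have h : w ⬝ᵥ w = v ⬝ᵥ v := by
      rw [hw, dotProduct_mulVec, vecMul_transpose, mulVec_mulVec, hUU, one_mulVec]
    rw [← h]
    simp [dotProduct, sq]
  have hbdd : BddAbove (Set.range hA.eigenvalues) := (Set.finite_range _).bddAbove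
  calc v ⬝ᵥ (A *ᵥ v) = ∑ i, hA.eigenvalues i * (w i)^2 := hquad
    _ ≤ ∑ i, (⨆ i, hA.eigenvalues i) * (w i)^2 := by
        apply Finset.sum_le_sum
        intro i _
        exact mul_le_mul_of_nonneg_right (le_ciSup hbdd i) (sq_nonneg _)
    _ = (⨆ i, hA.eigenvalues i) * (v ⬝ᵥ v) := by rw [hnorm, Finset.mul_sum]

lemma eig_eq_dot {m : Type*} [Fintype m] [DecidableEq m] {A : Matrix m m ℝ}
    (hA : A.IsHermitian) (i : m) :
    hA.eigenvalues i = (⇑(hA.eigenvectorBasis i)) ⬝ᵥ (A *ᵥ ⇑(hA.eigenvectorBasis i)) := by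
  simpa using hA.eigenvalues_eq i

lemma eigvec_unit {m : Type*} [Fintype m] [DecidableEq m] {A : Matrix m m ℝ}
    (hA : A.IsHermitian) (i : m) :
    (⇑(hA.eigenvectorBasis i)) ⬝ᵥ (⇑(hA.eigenvectorBasis i)) = 1 := by
  have h := hA.eigenvectorBasis.orthonormal.1 i
  have h2 : (inner ℝ (hA.eigenvectorBasis i) (hA.eigenvectorBasis i) : ℝ) = 1 := by
    rw [real_inner_self_eq_norm_sq, h]; norm_num
  rw [← h2, PiLp.inner_apply]
  simp [dotProduct, mul_comm, sq]


section helpers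
lemma quad_eq {n : ℕ} {m : Type*} [Fintype m] (X : Matrix (Fin n) m ℝ) (v : m → ℝ) :
    v ⬝ᵥ ((Xᵀ * X) *ᵥ v) = (X *ᵥ v) ⬝ᵥ (X *ᵥ v) := by
  rw [← mulVec_mulVec, dotProduct_mulVec, vecMul_transpose]

lemma mulVec_append {n p : ℕ} (f : Fin n → Fin p → ℝ) (X : Matrix (Fin n) (Fin (1+p)) ℝ)
    (hX : ∀ i, X i = Fin.append (fun _ : Fin 1 => (1:ℝ)) (f i)) (v : Fin (1+p) → ℝ) :
    X *ᵥ v = fun i => v (Fin.castAdd p 0) + ∑ j, f i j * v (Fin.natAdd 1 j) := by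
  funext i
  simp [mulVec, dotProduct, hX i, Fin.sum_univ_add, Fin.append_left, Fin.append_right]
end helpers

/-- For the design matrix `X` with rows `(1, xᵢᵀ)` and the rescaled matrix `X_λ` with rows
`(1, xᵢᵀ/λ)`, when `λ ≥ 1` the largest eigenvalue satisfies
`σ_max(X_λᵀ X_λ) ≤ σ_max(XᵀX)/λ + (λ−1)n/λ ≤ σ_max(XᵀX)`. -/
theorem sigma_max_X_lambda {n p : ℕ} {lam : ℝ} (hlam : 1 ≤ lam)
    (x : Fin n → Fin p → ℝ)
    (X Xlam : Matrix (Fin n) (Fin (1 + p)) ℝ)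
    (hX : ∀ i, X i = Fin.append (fun _ : Fin 1 => (1:ℝ)) (x i))
    (hXlam : ∀ i, Xlam i = Fin.append (fun _ : Fin 1 => (1:ℝ)) (fun j => x i j / lam))
    (h1 : (Xᵀ * X).IsHermitian) (h2 : (Xlamᵀ * Xlam).IsHermitian) :
    (⨆ i, h2.eigenvalues i) ≤ (⨆ i, h1.eigenvalues i) / lam + (lam - 1) * n / lam ∧
    (⨆ i, h1.eigenvalues i) / lam + (lam - 1) * n / lam ≤ ⨆ i, h1.eigenvalues i := by
  have hlam0 : (0:ℝ) < lam := lt_of_lt_of_le one_pos hlam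
  have hlamne : lam ≠ 0 := ne_of_gt hlam0
  set M1 := ⨆ i, h1.eigenvalues i with hM1
  set bf : (Fin (1+p) → ℝ) → ℝ := fun v => v (Fin.castAdd p 0) with hbf
  set af : (Fin (1+p) → ℝ) → Fin n → ℝ :=
    fun v i => ∑ j, x i j * v (Fin.natAdd 1 j) with haf
  have hquadX : ∀ v : Fin (1+p) → ℝ, v ⬝ᵥ ((Xᵀ * X) *ᵥ v) = ∑ i, (bf v + af v i)^2 := by
    intro v
    rw [quad_eq, mulVec_append x X hX v]
    simp [dotProduct, sq, hbf, haf]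
  have hquadXlam : ∀ v : Fin (1+p) → ℝ,
      v ⬝ᵥ ((Xlamᵀ * Xlam) *ᵥ v) = ∑ i, (bf v + af v i / lam)^2 := by
    intro v
    rw [quad_eq, mulVec_append (fun i j => x i j / lam) Xlam hXlam v]
    have : ∀ i, (∑ j, x i j / lam * v (Fin.natAdd 1 j)) = af v i / lam := by
      intro i
      rw [haf]
      simp only [Finset.sum_div]
      exact Finset.sum_congr rfl fun j _ => by ring
    simp only [this]
    simp [dotProduct, sq, hbf]
  -- n ≤ M1
  have hn : (n:ℝ) ≤ M1 := by
    set e : Fin (1+p) → ℝ := Pi.single (Fin.castAdd p 0) 1 with he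
    have hbe : bf e = 1 := by simp [hbf, he]
    have hae : ∀ i, af e i = 0 := by
      intro i
      rw [haf]
      apply Finset.sum_eq_zero
      intro j _
      have : (Fin.natAdd 1 j : Fin (1+p)) ≠ Fin.castAdd p 0 := by
        simp [Fin.ext_iff]
      rw [he, Pi.single_eq_of_ne this, mul_zero]
    have hee : e ⬝ᵥ e = 1 := by
      simp [he, dotProduct, Pi.single_apply]
    have hr := rayleigh_le h1 e
    rw [hquadX, hee, mul_one] at hr
    simpa [hbe, hae] using hr
  have hmain : ∀ i, h2.eigenvalues i ≤ M1 / lam + (lam - 1) * n / lam := by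
    intro i
    set v : Fin (1+p) → ℝ := ⇑(h2.eigenvectorBasis i) with hv
    have hv1 : v ⬝ᵥ v = 1 := eigvec_unit h2 i
    have hb2 : (bf v)^2 ≤ 1 := by
      have hvv : v ⬝ᵥ v = ∑ j, (v j)^2 := by simp [dotProduct, sq]
      rw [← hv1, hvv]
      exact Finset.single_le_sum (fun j _ => sq_nonneg (v j)) (Finset.mem_univ _)
    have hAle : ∑ k, (bf v + af v k)^2 ≤ M1 := by
      have hr := rayleigh_le h1 v
      rwa [hquadX, hv1, mul_one] at hr
    rw [eig_eq_dot h2 i, ← hv, hquadXlam v]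
    calc ∑ k, (bf v + af v k / lam)^2
        ≤ ∑ k, ((bf v + af v k)^2 / lam + (1 - 1/lam) * (bf v)^2) := by
          apply Finset.sum_le_sum
          intro k _
          have key : (af v k)^2 / lam^2 ≤ (af v k)^2 / lam := by
            apply div_le_div_of_nonneg_left (sq_nonneg _) hlam0
            nlinarith
          calc (bf v + af v k / lam)^2
              = (bf v)^2 + 2 * bf v * af v k / lam + (af v k)^2 / lam^2 := by ring
            _ ≤ (bf v)^2 + 2 * bf v * af v k / lam + (af v k)^2 / lam := by linarith
            _ = (bf v + af v k)^2 / lam + (1 - 1/lam) * (bf v)^2 := by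
                field_simp
                ring
      _ = (∑ k, (bf v + af v k)^2) / lam + n * ((1 - 1/lam) * (bf v)^2) := by
          rw [Finset.sum_add_distrib, Finset.sum_const, Finset.card_univ, ← Finset.sum_div]
          simp [nsmul_eq_mul]
      _ ≤ M1 / lam + (lam - 1) * n / lam := by
          have h1' : (∑ k, (bf v + af v k)^2) / lam ≤ M1 / lam := by
            gcongr
          have h2' : n * ((1 - 1/lam) * (bf v)^2) ≤ (lam - 1) * n / lam := by
            have hc : (0:ℝ) ≤ 1 - 1/lam := by
              rw [sub_nonneg, div_le_one hlam0]; exact hlam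
            have : n * ((1 - 1/lam) * (bf v)^2) ≤ n * ((1 - 1/lam) * 1) := by
              gcongr
            calc n * ((1 - 1/lam) * (bf v)^2) ≤ n * ((1 - 1/lam) * 1) := this
              _ = (lam - 1) * n / lam := by field_simp
          linarith
  refine ⟨ciSup_le hmain, ?_⟩
  rw [← add_div, div_le_iff₀ hlam0]
  nlinarith [mul_le_mul_of_nonneg_left hn (sub_nonneg.2 hlam)]
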